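/- For a countable graph G=(V,E) the following are equivalent: (1) for every subset V_1 ⊆ V such that both V_1 and V∖V_1 are infinite, there exists a nonempty W_1 ⊆ V_1 such that every v ∈ W_1 has infinitely many neighbors in W_1; (2) for every bijection φ: V → ℤ there exists an infinite increasing path in G. -/

import Mathlib

/-- There is an infinite increasing path in `G` under the vertex labeling `φ`. -/
def InfIncrPath {V α : Type*} [Preorder α] (G : SimpleGraph V) (φ : V → α) : Prop :=
  ∃ w : ℕ → V, Function.Injective w ∧ ∀ i, G.Adj (w i) (w (i + 1)) ∧ φ (w i) < φ (w (i + 1))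

/-- An explicit equivalence `ℕ ⊕ ℕ ≃ ℤ` sending `inl n` to `n` and `inr n` to `-1 - n`. -/
def natSumNatEquivInt : ℕ ⊕ ℕ ≃ ℤ where
  toFun := Sum.elim (fun n : ℕ => (n : ℤ)) (fun n : ℕ => -1 - (n : ℤ))
  invFun z := if 0 ≤ z then Sum.inl z.toNat else Sum.inr (-1 - z).toNat
  left_inv x := by
    rcases x with n | n
    · simp
    · have h : ¬ (0 ≤ -1 - (n : ℤ)) := by omega
      simp only [Sum.elim_inr, h, if_false]
      congr 1
      omega
  right_inv z := by
    by_cases h : 0 ≤ z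
    · simp only [if_pos h, Sum.elim_inl]
      omega
    · simp only [if_neg h, Sum.elim_inr]
      omega

theorem natSumNatEquivInt_inl_nonneg (n : ℕ) : 0 ≤ natSumNatEquivInt (Sum.inl n) := by
  simp [natSumNatEquivInt]

theorem natSumNatEquivInt_inr_neg (n : ℕ) : natSumNatEquivInt (Sum.inr n) < 0 := by
  simp only [natSumNatEquivInt, Equiv.coe_fn_mk, Sum.elim_inr]
  omega

/-- From the failure of condition (1) on `V₁`, extract an infinite independent set inside `V₁`,
given as the range of an injective sequence. -/
theorem exists_indep_seq {V : Type*} (G : SimpleGraph V) (V₁ : Set V)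
    (hinf : V₁.Infinite)
    (H : ∀ W ⊆ V₁, W.Nonempty → ∃ v ∈ W, ¬ ({u | u ∈ W ∧ G.Adj v u}.Infinite)) :
    ∃ y : ℕ → V, Function.Injective y ∧ Set.range y ⊆ V₁ ∧
      ∀ m n, ¬ G.Adj (y m) (y n) := by
  classical
  -- the subtype of infinite subsets of V₁
  let S := {R : Set V // R ⊆ V₁ ∧ R.Infinite}
  have pick : ∀ R : S, ∃ v ∈ R.1, ¬ ({u | u ∈ R.1 ∧ G.Adj v u}.Infinite) :=
    fun R => H R.1 R.2.1 R.2.2.nonempty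
  choose pv hmem hfin using pick
  have hfin' : ∀ R : S, ({u | u ∈ R.1 ∧ G.Adj (pv R) u}).Finite :=
    fun R => Set.not_infinite.mp (hfin R)
  let next : S → S := fun R =>
    ⟨R.1 \ insert (pv R) {u | u ∈ R.1 ∧ G.Adj (pv R) u},
      fun v hv => R.2.1 hv.1,
      (R.2.2.diff ((hfin' R).insert (pv R)))⟩
  let Rs : ℕ → S := fun n => next^[n] ⟨V₁, subset_rfl, hinf⟩
  have hRs_succ : ∀ n, Rs (n + 1) = next (Rs n) := by
    intro n
    simp only [Rs, Function.iterate_succ_apply']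
  let y : ℕ → V := fun n => pv (Rs n)
  have hy_mem : ∀ n, y n ∈ (Rs n).1 := fun n => hmem (Rs n)
  -- monotonicity: for n < m, Rs m ⊆ (next (Rs n)).1
  have hmono : ∀ n m, n < m → (Rs m).1 ⊆ (next (Rs n)).1 := by
    intro n m hnm
    induction m with
    | zero => omega
    | succ k ih =>
      rcases Nat.lt_succ_iff_lt_or_eq.mp hnm with h | h
      · intro v hv
        rw [hRs_succ] at hv
        exact ih h (hv.1)
      · subst h
        rw [hRs_succ]
    
  have key : ∀ n m, n < m → y m ≠ y n ∧ ¬ G.Adj (y n) (y m) := by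
    intro n m hnm
    have h1 : y m ∈ (next (Rs n)).1 := hmono n m hnm (hy_mem m)
    obtain ⟨h2, h3⟩ := h1
    constructor
    · intro he
      exact h3 (Set.mem_insert_iff.mpr (Or.inl he))
    · intro hadj
      exact h3 (Set.mem_insert_iff.mpr (Or.inr ⟨h2, hadj⟩))
  refine ⟨y, ?_, ?_, ?_⟩
  · intro a b hab
    rcases lt_trichotomy a b with h | h | h
    · exact absurd hab.symm (key a b h).1
    · exact h
    · exact absurd hab (key b a h).1
  · rintro v ⟨n, rfl⟩
    exact (Rs n).2.1 (hy_mem n)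
  · intro m n hadj
    rcases lt_trichotomy m n with h | h | h
    · exact (key m n h).2 hadj
    · subst h; exact G.irrefl hadj
    · exact (key n m h).2 hadj.symm

theorem stmt10 {V : Type*} [Countable V] [Infinite V] (G : SimpleGraph V) :
    (∀ V₁ : Set V, V₁.Infinite → V₁ᶜ.Infinite →
      ∃ W₁ ⊆ V₁, W₁.Nonempty ∧ ∀ v ∈ W₁, {u | u ∈ W₁ ∧ G.Adj v u}.Infinite) ↔
    (∀ φ : V ≃ ℤ, InfIncrPath G (fun v => φ v)) := by
  classical
  constructor
  · -- (1) → (2)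
    intro h φ
    set V₁ : Set V := {v | 0 ≤ φ v} with hV₁
    have hV₁inf : V₁.Infinite := by
      refine Set.infinite_of_injective_forall_mem
        (f := fun n : ℕ => φ.symm (n : ℤ)) ?_ ?_
      · intro a b hab
        have := φ.symm.injective hab
        exact_mod_cast this
      · intro n
        show (0 : ℤ) ≤ φ (φ.symm (n : ℤ))
        rw [Equiv.apply_symm_apply]
        exact Int.natCast_nonneg n
    have hV₁cinf : V₁ᶜ.Infinite := by
      refine Set.infinite_of_injective_forall_mem
        (f := fun n : ℕ => φ.symm (-1 - (n : ℤ))) ?_ ?_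
      · intro a b hab
        have := φ.symm.injective hab
        omega
      · intro n
        show ¬ (0 : ℤ) ≤ φ (φ.symm (-1 - (n : ℤ)))
        rw [Equiv.apply_symm_apply]
        omega
    obtain ⟨W₁, hWsub, hWne, hWdeg⟩ := h V₁ hV₁inf hV₁cinf
    -- from each vertex of W₁ we can step to a neighbor in W₁ with strictly larger label
    have step : ∀ v ∈ W₁, ∃ u, (u ∈ W₁ ∧ G.Adj v u) ∧ φ v < φ u := by
      intro v hv
      by_contra hcon
      push_neg at hcon
      have hsub : {u | u ∈ W₁ ∧ G.Adj v u} ⊆ (fun x => φ x) ⁻¹' Set.Icc 0 (φ v) := by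
        intro u hu
        refine ⟨hWsub hu.1, hcon u hu⟩
      have hfin : ({u | u ∈ W₁ ∧ G.Adj v u}).Finite :=
        ((Set.finite_Icc (0 : ℤ) (φ v)).preimage
          (φ.injective.injOn)).subset hsub
      exact (hWdeg v hv) hfin
    choose F hF hlt using step
    let w' : ℕ → {v // v ∈ W₁} := fun n =>
      Nat.rec ⟨hWne.some, hWne.some_mem⟩ (fun _ p => ⟨F p.1 p.2, (hF p.1 p.2).1⟩) n
    have hstep : ∀ n, (w' (n + 1)).1 = F (w' n).1 (w' n).2 := fun n => rfl
    have hadj : ∀ n, G.Adj ((w' n).1) ((w' (n + 1)).1) := by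
      intro n
      rw [hstep]
      exact (hF (w' n).1 (w' n).2).2
    have hmono : ∀ n, φ ((w' n).1) < φ ((w' (n + 1)).1) := by
      intro n
      rw [hstep]
      exact hlt (w' n).1 (w' n).2
    have hsm : StrictMono (fun n => φ ((w' n).1)) :=
      strictMono_nat_of_lt_succ hmono
    refine ⟨fun n => (w' n).1, ?_, fun i => ⟨hadj i, hmono i⟩⟩
    intro a b hab
    exact hsm.injective (by simp only [hab])
  · -- (2) → (1), by contradiction
    intro hφ V₁ hV₁inf hV₁cinf
    by_contra hW
    push_neg at hW
    have H : ∀ W ⊆ V₁, W.Nonempty → ∃ v ∈ W, ¬ ({u | u ∈ W ∧ G.Adj v u}.Infinite) := by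
      intro W hsub hne
      obtain ⟨v, hv, hfin⟩ := hW W hsub hne
      exact ⟨v, hv, Set.not_infinite.mpr hfin⟩
    obtain ⟨y, hyinj, hysub, hyindep⟩ := exists_indep_seq G V₁ hV₁inf H
    set Y : Set V := Set.range y with hY
    have hYc_inf : Set.Infinite Yᶜ := hV₁cinf.mono (Set.compl_subset_compl.mpr hysub)
    have : Infinite ↥(Yᶜ) := hYc_inf.to_subtype
    obtain ⟨d⟩ := nonempty_denumerable ↥(Yᶜ)
    let eY : ↥Y ≃ ℕ := (Equiv.ofInjective y hyinj).symm
    let eC : ↥(Yᶜ) ≃ ℕ := @Denumerable.eqv _ d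
    let φ : V ≃ ℤ :=
      (Equiv.Set.sumCompl Y).symm.trans ((eY.sumCongr eC).trans natSumNatEquivInt)
    have hmemY : ∀ v : V, 0 ≤ φ v ↔ v ∈ Y := by
      intro v
      by_cases hv : v ∈ Y
      · simp only [φ, Equiv.trans_apply, Equiv.Set.sumCompl_symm_apply_of_mem hv,
          Equiv.sumCongr_apply, Sum.map_inl]
        exact ⟨fun _ => hv, fun _ => natSumNatEquivInt_inl_nonneg _⟩
      · simp only [φ, Equiv.trans_apply, Equiv.Set.sumCompl_symm_apply_of_notMem hv,
          Equiv.sumCongr_apply, Sum.map_inr]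
        constructor
        · intro h
          exact absurd h (not_le.mpr (natSumNatEquivInt_inr_neg _))
        · intro h; exact absurd h hv
    obtain ⟨w, hwinj, hw⟩ := hφ φ
    set s : ℕ → ℤ := fun n => φ (w n) with hs
    have hsm : StrictMono s := strictMono_nat_of_lt_succ (fun n => (hw n).2)
    have hge : ∀ n : ℕ, s 0 + n ≤ s n := by
      intro n
      induction n with
      | zero => simp
      | succ k ih =>
        have h2 : s k < s (k + 1) := hsm (by omega)
        push_cast
        omega
    -- find an index where two consecutive labels are nonnegative
    set i : ℕ := (-s 0).toNat with hi
    have h0 : 0 ≤ s i := by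
      have h1 := hge i
      have h2 : -s 0 ≤ (i : ℤ) := Int.self_le_toNat _
      omega
    have h1 : 0 ≤ s (i + 1) := le_of_lt (lt_of_le_of_lt h0 (hsm (Nat.lt_succ_self i)))
    have hwY : w i ∈ Y := (hmemY (w i)).mp h0
    have hwY' : w (i + 1) ∈ Y := (hmemY (w (i + 1))).mp h1
    obtain ⟨m, hm⟩ := hwY
    obtain ⟨n, hn⟩ := hwY'
    have : G.Adj (y m) (y n) := by
      rw [hm, hn]
      exact (hw i).1
    exact hyindep m n this
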